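/- There are exactly 1 + p + p^2 + ... + p^N left ideals of norm p^N in Mat_2(Z_p), and each such ideal is generated by an upper triangular matrix of the form [[p^n, t],[0, p^m]] with n + m = N and t ∈ Z_p; the triple (n, m, t mod p^m) uniquely determines the ideal. -/

import Mathlib

open Matrix

/-- The matrix `[[p^n, t],[0, p^m]]` over `ℤ_[p]`. -/
noncomputable def genMat (p : ℕ) [Fact p.Prime] (n m : ℕ) (t : ℤ_[p]) :
    Matrix (Fin 2) (Fin 2) ℤ_[p] :=
  !![(p : ℤ_[p]) ^ n, t; 0, (p : ℤ_[p]) ^ m]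

/-- A left ideal of `Mat₂(ℤ_p)` has norm `p^N` if it is generated by an element whose
determinant (reduced norm) has valuation `N`. -/
def hasNorm (p : ℕ) [Fact p.Prime] (I : Ideal (Matrix (Fin 2) (Fin 2) ℤ_[p])) (N : ℕ) : Prop :=
  ∃ g : Matrix (Fin 2) (Fin 2) ℤ_[p], I = Ideal.span {g} ∧ ‖g.det‖ = (p : ℝ) ^ (-(N : ℤ))

section Aux
variable {p : ℕ} [Fact p.Prime]

abbrev M2 (p : ℕ) [Fact p.Prime] := Matrix (Fin 2) (Fin 2) ℤ_[p]

lemma p_ne_zero : (p : ℤ_[p]) ≠ 0 := by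
  exact_mod_cast (Fact.out : p.Prime).ne_zero

lemma genMat_det (n m : ℕ) (t : ℤ_[p]) : (genMat p n m t).det = (p:ℤ_[p])^(n+m) := by
  simp [genMat, Matrix.det_fin_two_of, pow_add]

lemma genMat_det_ne (n m : ℕ) (t : ℤ_[p]) : (genMat p n m t).det ≠ 0 := by
  rw [genMat_det]; exact pow_ne_zero _ p_ne_zero

lemma norm_genMat_det (n m : ℕ) (t : ℤ_[p]) :
    ‖(genMat p n m t).det‖ = (p:ℝ) ^ (-((n+m:ℕ):ℤ)) := by
  rw [genMat_det]
  exact_mod_cast PadicInt.norm_p_pow (n+m)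

lemma rpow_inj {a b : ℕ} (h : (p:ℝ) ^ (-(a:ℤ)) = (p:ℝ) ^ (-(b:ℤ))) : a = b := by
  have hp1 : (1:ℝ) < p := by exact_mod_cast (Fact.out : p.Prime).one_lt
  have := zpow_right_injective₀ (by positivity) (ne_of_gt hp1) h
  omega

/-- span of unit multiple -/
lemma span_unit_mul (u g : M2 p) (hu : IsUnit u) :
    Ideal.span {u * g} = Ideal.span {g} := by
  obtain ⟨v, rfl⟩ := hu
  apply le_antisymm <;> rw [Ideal.span_le, Set.singleton_subset_iff] <;>
    rw [SetLike.mem_coe, Ideal.mem_span_singleton']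
  · exact ⟨v, rfl⟩
  · exact ⟨(v⁻¹ : _ˣ), by rw [← mul_assoc, Units.inv_mul, one_mul]⟩

lemma span_eq_iff {g g' : M2 p} (hg : g.det ≠ 0) :
    Ideal.span {g} = Ideal.span {g'} ↔ ∃ u : M2 p, IsUnit u ∧ g' = u * g := by
  constructor
  · intro h
    have h1 : g' ∈ Ideal.span {g} := by
      rw [h]; exact Ideal.subset_span rfl
    have h2 : g ∈ Ideal.span {g'} := by
      rw [← h]; exact Ideal.subset_span rfl
    rw [Ideal.mem_span_singleton'] at h1 h2
    obtain ⟨a, ha⟩ := h1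
    obtain ⟨b, hb⟩ := h2
    refine ⟨a, ?_, ha.symm⟩
    have hba : (b * a) * g = 1 * g := by rw [mul_assoc, ha, hb, one_mul]
    have hcan : b * a = 1 := by
      have h0 : ((b * a) - 1) * g = 0 := by rw [sub_mul, hba, sub_self]
      have h0' : ((b * a) - 1) * (g * g.adjugate) = 0 := by
        rw [← mul_assoc, h0, zero_mul]
      rw [Matrix.mul_adjugate] at h0'
      have : ∀ i j, ((b*a) - 1) i j * g.det = 0 := by
        intro i j
        have := congrFun (congrFun h0' i) j
        simpa [Matrix.smul_apply, mul_comm] using this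
      have hz : (b*a) - 1 = 0 := by
        ext i j
        have := this i j
        rcases mul_eq_zero.mp this with h | h
        · simpa using h
        · exact absurd h hg
      exact sub_eq_zero.mp hz
    exact ⟨⟨a, b, mul_eq_one_comm.mp hcan, hcan⟩, rfl⟩
  · rintro ⟨u, hu, rfl⟩
    exact (span_unit_mul u g hu).symm

lemma tri_case (a b d : ℤ_[p]) (ha : a ≠ 0) (hd : d ≠ 0) :
    ∃ u : M2 p, IsUnit u ∧ ∃ n m t, u * !![a,b;0,d] = genMat p n m t := by
  obtain ⟨ua, n, hua⟩ : ∃ (v : ℤ_[p]ˣ) (n : ℕ), a = v * (p:ℤ_[p])^n :=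
    ⟨PadicInt.unitCoeff ha, _, PadicInt.unitCoeff_spec ha⟩
  obtain ⟨ud, m, hud⟩ : ∃ (v : ℤ_[p]ˣ) (m : ℕ), d = v * (p:ℤ_[p])^m :=
    ⟨PadicInt.unitCoeff hd, _, PadicInt.unitCoeff_spec hd⟩
  refine ⟨!![(↑ua⁻¹ : ℤ_[p]), 0; 0, ↑ud⁻¹], ?_, n, m, ↑ua⁻¹ * b, ?_⟩
  · rw [Matrix.isUnit_iff_isUnit_det, Matrix.det_fin_two_of]
    exact (by simpa using (ua⁻¹ * ud⁻¹).isUnit : IsUnit ((↑ua⁻¹ : ℤ_[p]) * ↑ud⁻¹ - 0 * 0))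
  · rw [Matrix.mul_fin_two, genMat]
    congr 1 <;> simp [hua, hud, ← mul_assoc]

lemma reduce_case (A : M2 p) (hA : A.det ≠ 0) (h00 : A 0 0 ≠ 0) (hdvd : A 0 0 ∣ A 1 0) :
    ∃ u : M2 p, IsUnit u ∧ ∃ n m t, u * A = genMat p n m t := by
  obtain ⟨q, hq⟩ := hdvd
  have hE : !![1, 0; -q, 1] * A = !![A 0 0, A 0 1; 0, A 1 1 - q * A 0 1] := by
    conv_lhs => rw [Matrix.eta_fin_two A]
    rw [Matrix.mul_fin_two]
    congr 1 <;> simp [hq] <;> ring_nf <;> simp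
  have hd : A 1 1 - q * A 0 1 ≠ 0 := by
    intro h
    apply hA
    have : (!![1, 0; -q, 1] * A).det = A 0 0 * (A 1 1 - q * A 0 1) - A 0 1 * 0 := by
      rw [hE, Matrix.det_fin_two_of]
    rw [Matrix.det_mul, Matrix.det_fin_two_of] at this
    simp [h] at this
    simpa using this
  obtain ⟨u, hu, n, m, t, hgen⟩ := tri_case (A 0 0) (A 0 1) _ h00 hd
  refine ⟨u * !![1, 0; -q, 1], ?_, n, m, t, ?_⟩
  · refine hu.mul ?_
    rw [Matrix.isUnit_iff_isUnit_det, Matrix.det_fin_two_of]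
    simpa using isUnit_one
  · rw [mul_assoc, hE, hgen]

lemma exists_hnf (g : M2 p) (hg : g.det ≠ 0) :
    ∃ u : M2 p, IsUnit u ∧ ∃ n m t, u * g = genMat p n m t := by
  rcases eq_or_ne (g 1 0) 0 with h0 | h0
  · apply reduce_case g hg
    · intro h
      apply hg
      rw [Matrix.det_fin_two]
      rw [h, h0]; ring
    · rw [h0]; exact dvd_zero _
  · rcases ValuationRing.dvd_total (g 0 0) (g 1 0) with h | h
    · apply reduce_case g hg _ h
      intro hz
      rw [hz] at h
      exact h0 (zero_dvd_iff.mp h)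
    · have hS : (!![0,1;1,0] : M2 p) * g = !![g 1 0, g 1 1; g 0 0, g 0 1] := by
        conv_lhs => rw [Matrix.eta_fin_two g]
        rw [Matrix.mul_fin_two]
        congr 1 <;> ring
      have hdet : (!![(0:ℤ_[p]),1;1,0] * g).det ≠ 0 := by
        rw [Matrix.det_mul, Matrix.det_fin_two_of]
        simpa using hg
      obtain ⟨u, hu, n, m, t, hgen⟩ := by
        apply reduce_case _ hdet
        · rw [hS]; simpa using h0
        · rw [hS]; simpa using h
      refine ⟨u * !![0,1;1,0], ?_, n, m, t, ?_⟩
      · refine hu.mul ?_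
        rw [Matrix.isUnit_iff_isUnit_det, Matrix.det_fin_two_of]
        simpa using isUnit_one.neg
      · rw [mul_assoc, hgen]

lemma norm_isUnit {x : ℤ_[p]} (h : IsUnit x) : ‖x‖ = 1 := PadicInt.isUnit_iff.mp h

lemma part2 (N : ℕ) (I : Ideal (M2 p)) (h : ∃ g : M2 p, I = Ideal.span {g} ∧ ‖g.det‖ = (p : ℝ) ^ (-(N : ℤ))) :
    ∃ (n m : ℕ) (t : ℤ_[p]), n + m = N ∧ I = Ideal.span {genMat p n m t} := by
  obtain ⟨g, hI, hnorm⟩ := h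
  have hg : g.det ≠ 0 := by
    intro h
    rw [h, norm_zero] at hnorm
    have hp0 : (0:ℝ) < (p:ℝ) := by exact_mod_cast (Fact.out : p.Prime).pos
    exact absurd hnorm.symm (ne_of_gt (zpow_pos hp0 (-(N:ℤ))))
  obtain ⟨u, hu, n, m, t, hgen⟩ := exists_hnf g hg
  refine ⟨n, m, t, ?_, ?_⟩
  · have hdet : (genMat p n m t).det = u.det * g.det := by rw [← hgen, Matrix.det_mul]
    have hnu : ‖u.det‖ = 1 := norm_isUnit ((Matrix.isUnit_iff_isUnit_det u).mp hu)
    have : ‖(genMat p n m t).det‖ = (p:ℝ) ^ (-(N:ℤ)) := by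
      rw [hdet, norm_mul, hnu, one_mul, hnorm]
    rw [norm_genMat_det] at this
    exact rpow_inj this
  · rw [hI, ← hgen, span_unit_mul u g hu]

lemma part3 (N : ℕ) (n m n' m' : ℕ) (t t' : ℤ_[p]) (h1 : n + m = N) (h2 : n' + m' = N) :
    Ideal.span {genMat p n m t} = Ideal.span {genMat p n' m' t'} ↔
      n = n' ∧ m = m' ∧ (p : ℤ_[p]) ^ m ∣ (t - t') := by
  constructor
  · intro h
    obtain ⟨u, hu, heq⟩ := (span_eq_iff (genMat_det_ne n m t)).mp h
    rw [Matrix.eta_fin_two u] at heq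
    rw [genMat, genMat, Matrix.mul_fin_two] at heq
    have e00 : u 0 0 * (p:ℤ_[p])^n + t' * 0 = (p:ℤ_[p])^n' := by
      have := (congrFun (congrFun heq 0) 0).symm
      simpa using this
    have e01 : u 0 0 * t + u 0 1 * (p:ℤ_[p])^m = t' := by
      have := (congrFun (congrFun heq 0) 1).symm
      simpa using this
    have e10 : u 1 0 * (p:ℤ_[p])^n = 0 := by
      have := (congrFun (congrFun heq 1) 0).symm
      simpa using this
    have hc : u 1 0 = 0 :=
      (mul_eq_zero.mp e10).resolve_right (pow_ne_zero _ p_ne_zero)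
    have hau : IsUnit (u 0 0) := by
      have hdu : IsUnit u.det := (Matrix.isUnit_iff_isUnit_det u).mp hu
      rw [Matrix.det_fin_two, hc] at hdu
      simp at hdu
      exact hdu.1
    rw [mul_zero, add_zero] at e00
    have hn : n = n' := by
      apply rpow_inj (p := p)
      calc (p:ℝ) ^ (-(n:ℤ)) = ‖u 0 0 * (p:ℤ_[p])^n‖ := by
            rw [norm_mul, norm_isUnit hau, one_mul]
            exact_mod_cast (PadicInt.norm_p_pow (p := p) n).symm
        _ = (p:ℝ) ^ (-(n':ℤ)) := by
            rw [e00]; exact_mod_cast PadicInt.norm_p_pow (p := p) n'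
    have ha1 : u 0 0 = 1 := by
      have : u 0 0 * (p:ℤ_[p])^n = 1 * (p:ℤ_[p])^n := by
        rw [one_mul, e00, hn]
      exact mul_right_cancel₀ (pow_ne_zero _ p_ne_zero) this
    have hm : m = m' := by omega
    refine ⟨hn, hm, -(u 0 1), ?_⟩
    rw [ha1, one_mul] at e01
    rw [← e01]; ring
  · rintro ⟨rfl, rfl, s, hs⟩
    have key : genMat p n m t' = !![1, -s; 0, 1] * genMat p n m t := by
      ext i j
      fin_cases i <;> fin_cases j <;>
        simp [genMat, Matrix.mul_apply, Fin.sum_univ_two] <;>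
        linear_combination -hs
    rw [key, span_unit_mul]
    rw [Matrix.isUnit_iff_isUnit_det, Matrix.det_fin_two_of]
    simpa using isUnit_one

lemma dvd_iff_toZModPow {m : ℕ} {x : ℤ_[p]} :
    (p:ℤ_[p])^m ∣ x ↔ PadicInt.toZModPow m x = 0 := by
  rw [← RingHom.mem_ker, PadicInt.ker_toZModPow, Ideal.mem_span_singleton]

noncomputable def idx (p : ℕ) [Fact p.Prime] (N : ℕ)
    (x : Σ i : Fin (N+1), ZMod (p ^ (N - (i:ℕ)))) : Ideal (M2 p) :=
  Ideal.span {genMat p x.1 (N - (x.1 : ℕ)) ((x.2.val : ℤ_[p]))}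

lemma idx_inj (N : ℕ) : Function.Injective (idx p N) := by
  rintro ⟨i, a⟩ ⟨j, b⟩ h
  have hi : (i:ℕ) + (N - (i:ℕ)) = N := by omega
  have hj : (j:ℕ) + (N - (j:ℕ)) = N := by omega
  obtain ⟨hn, hm, hdvd⟩ := (part3 N _ _ _ _ _ _ hi hj).mp h
  have hij : i = j := Fin.ext hn
  subst hij
  have h0 : PadicInt.toZModPow (N - (i:ℕ)) (((a.val : ℤ_[p])) - ((b.val : ℤ_[p]))) = 0 :=
    dvd_iff_toZModPow.mp hdvd
  rw [map_sub, map_natCast, map_natCast, sub_eq_zero] at h0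
  rw [ZMod.natCast_val, ZMod.natCast_val, ZMod.cast_id, ZMod.cast_id] at h0
  rw [h0]

lemma range_idx (N : ℕ) :
    Set.range (idx p N) =
      {I : Ideal (M2 p) | ∃ g : M2 p, I = Ideal.span {g} ∧ ‖g.det‖ = (p : ℝ) ^ (-(N : ℤ))} := by
  ext I
  constructor
  · rintro ⟨⟨i, a⟩, rfl⟩
    refine ⟨genMat p i (N - (i:ℕ)) _, rfl, ?_⟩
    rw [norm_genMat_det]
    congr 1
    have : (i:ℕ) + (N - (i:ℕ)) = N := by omega
    rw [this]
  · rintro ⟨g, hIeq, hnorm⟩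
    obtain ⟨n, m, t, hnm, hI⟩ := part2 N I ⟨g, hIeq, hnorm⟩
    have hn : n < N + 1 := by omega
    obtain rfl : m = N - n := by omega
    refine ⟨⟨⟨n, hn⟩, PadicInt.toZModPow (N - n) t⟩, ?_⟩
    rw [idx, hI]
    apply (part3 N n (N - n) n (N - n) _ t (by omega) (by omega)).mpr
    refine ⟨rfl, rfl, ?_⟩
    rw [dvd_iff_toZModPow, map_sub, map_natCast, ZMod.natCast_val, ZMod.cast_id, sub_self]

lemma part1 (N : ℕ) :
    Set.ncard {I : Ideal (M2 p) | ∃ g : M2 p, I = Ideal.span {g} ∧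
      ‖g.det‖ = (p : ℝ) ^ (-(N : ℤ))} = ∑ i ∈ Finset.range (N + 1), p ^ i := by
  rw [← range_idx, ← Nat.card_coe_set_eq, Nat.card_range_of_injective (idx_inj N),
      Nat.card_eq_fintype_card, Fintype.card_sigma]
  have h1 : ∀ i : Fin (N+1), Fintype.card (ZMod (p^(N-(i:ℕ)))) = p^(N-(i:ℕ)) :=
    fun i => ZMod.card _
  rw [Finset.sum_congr rfl (fun i _ => h1 i),
      Fin.sum_univ_eq_sum_range (fun i => p^(N-i)) (N+1)]
  rw [← Finset.sum_range_reflect (fun i => p^i) (N+1)]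
  rfl

end Aux

theorem stmt0 (p : ℕ) [Fact p.Prime] (N : ℕ) :
    (Set.ncard {I : Ideal (Matrix (Fin 2) (Fin 2) ℤ_[p]) | hasNorm p I N} =
      ∑ i ∈ Finset.range (N + 1), p ^ i) ∧
    (∀ I : Ideal (Matrix (Fin 2) (Fin 2) ℤ_[p]), hasNorm p I N →
      ∃ (n m : ℕ) (t : ℤ_[p]), n + m = N ∧ I = Ideal.span {genMat p n m t}) ∧
    (∀ (n m n' m' : ℕ) (t t' : ℤ_[p]), n + m = N → n' + m' = N →
      (Ideal.span {genMat p n m t} = Ideal.span {genMat p n' m' t'} ↔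
        n = n' ∧ m = m' ∧ (p : ℤ_[p]) ^ m ∣ (t - t'))) := by
  exact ⟨part1 N, fun I h => part2 N I h, fun n m n' m' t t' h1 h2 => part3 N n m n' m' t t' h1 h2⟩
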